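/- For all real n ≥ 7, (2√((n-2)(2n-6)) - n + 4)/(n-2) · ((2-√2)/2 + √2/n) < (2√2 - 1)·(2-√2)/2 + 2.76/n + 1.7/n². -/
import Mathlib


theorem stmt_14 (n : ℝ) (hn : 7 ≤ n) :
    (2*Real.sqrt ((n-2)*(2*n-6)) - n + 4)/(n-2) * ((2 - Real.sqrt 2)/2 + Real.sqrt 2/n)
    < (2*Real.sqrt 2 - 1)*(2 - Real.sqrt 2)/2 + 2.76/n + 1.7/n^2 := by
  have hn0 : (0:ℝ) < n := by linarith
  have hn2 : (0:ℝ) < n - 2 := by linarith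
  set s := Real.sqrt 2 with hsdef
  set t := Real.sqrt ((n-2)*(2*n-6)) with htdef
  have hs0 : 0 ≤ s := Real.sqrt_nonneg _
  have hs2 : s^2 = 2 := Real.sq_sqrt (by norm_num)
  have hslb : 1.41421 ≤ s := by nlinarith
  have hsub : s ≤ 1.41422 := by nlinarith
  have ht0 : 0 ≤ t := Real.sqrt_nonneg _
  have ht2 : t^2 = (n-2)*(2*n-6) := Real.sq_sqrt (by nlinarith)
  have htb : t ≤ s * (n - 5/2) := by
    have h1 : t ≤ Real.sqrt (2 * (n - 5/2)^2) := Real.sqrt_le_sqrt (by nlinarith)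
    rwa [Real.sqrt_mul (by norm_num) _, Real.sqrt_sq (by linarith), ← hsdef] at h1
  rw [div_mul_eq_mul_div, div_lt_iff₀ hn2, div_add_div _ _ (by norm_num) (ne_of_gt hn0)]
  rw [div_add_div _ _ (by positivity) (by positivity), div_add_div _ _ (by positivity) (by positivity)]
  rw [← mul_div_assoc, div_mul_eq_mul_div, div_lt_div_iff₀ (by positivity) (by positivity)]
  have hh1 : 0 ≤ (s*(n-5/2)-t) * (((2-s)*n+2*s) * (2*n^3)) := by
    apply mul_nonneg (by linarith)
    apply mul_nonneg (by nlinarith) (by positivity)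
  have hh2 : 0 ≤ (s-1.41421)*n^4 := by
    apply mul_nonneg (by linarith) (by positivity)
  have hh3 : 0 ≤ (1.41422-s)*n^3 := by
    apply mul_nonneg (by linarith) (by positivity)
  have hh4 : 0 ≤ (n-7)*n^2 := by
    apply mul_nonneg (by linarith) (by positivity)
  have hh5 : (0:ℝ) < n^2 := by positivity
  have he3 : (s^2-2)*n^3 = 0 := by rw [hs2]; ring
  have he4 : (s^2-2)*n^4 = 0 := by rw [hs2]; ring
  nlinarith [hh1, hh2, hh3, hh4, hh5, he3, he4]
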